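/- If (RG)^- is anticommutative, then for all y ∈ G_*, x ∈ G \ G_*, and α ∈ R with αy ∈ (RG)^-: (i) y^{-1}xy ∈ {x, x^*}; (ii) xy ∈ G_* if and only if xy ≠ yx; (iii) if xy ≠ yx then ασ(x) = α, and if xy = yx then 2α = 0. -/

import Mathlib

open Finsupp

/-- The generalized oriented map σ* on the group ring RG. -/
noncomputable def sigmaStar {R : Type} [CommRing R] {G : Type} [Group G]
    (inv : G → G) (σ : G →* Rˣ) (α : MonoidAlgebra R G) : MonoidAlgebra R G :=
  α.coeff.sum fun x a => MonoidAlgebra.single (inv x) ((σ x : R) * a)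

/-- The set of skew-symmetric elements of RG under σ*. -/
def skewSet {R : Type} [CommRing R] {G : Type} [Group G]
    (inv : G → G) (σ : G →* Rˣ) : Set (MonoidAlgebra R G) :=
  {α | sigmaStar inv σ α = -α}

section Helpers

variable {R : Type} [CommRing R] {G : Type} [Group G]

lemma sigmaStar_single' (iv : G → G) (σ : G →* Rˣ) (g : G) (r : R) :
    sigmaStar iv σ (MonoidAlgebra.single g r) = MonoidAlgebra.single (iv g) ((σ g : R) * r) := by
  unfold sigmaStar
  rw [MonoidAlgebra.coeff_single]
  exact Finsupp.sum_single_index (by simp [MonoidAlgebra.single_zero])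

lemma sigmaStar_add' (iv : G → G) (σ : G →* Rˣ) (A B : MonoidAlgebra R G) :
    sigmaStar iv σ (A + B) = sigmaStar iv σ A + sigmaStar iv σ B := by
  unfold sigmaStar
  rw [MonoidAlgebra.coeff_add]
  exact Finsupp.sum_add_index' (fun a => by simp [MonoidAlgebra.single_zero]) (fun a b₁ b₂ => by rw [mul_add, MonoidAlgebra.single_add])

lemma single_neg' (a : G) (b : R) :
    (MonoidAlgebra.single a (-b) : MonoidAlgebra R G) = -MonoidAlgebra.single a b := by
  have h : (Finsupp.single a (-b) : G →₀ R) = -(Finsupp.single a b) := Finsupp.single_neg a b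
  apply MonoidAlgebra.coeff_injective
  exact h

lemma gam_skew (iv : G → G) (σ : G →* Rˣ) (hinv : ∀ g, iv (iv g) = g)
    (hσ1 : ∀ g, (σ (iv g) : R) * (σ g : R) = 1) (g : G) :
    (MonoidAlgebra.single g (1:R) + MonoidAlgebra.single (iv g) (-(σ g : R))) ∈ skewSet iv σ := by
  show sigmaStar iv σ _ = _
  rw [sigmaStar_add', sigmaStar_single', sigmaStar_single', hinv g, mul_one, mul_neg, hσ1 g,
    neg_add]
  rw [← single_neg', ← single_neg', neg_neg]
  abel

lemma expand2 (a₁ a₂ b₁ b₂ : G) (r₁ r₂ s₁ s₂ : R) :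
    ((MonoidAlgebra.single a₁ r₁ + MonoidAlgebra.single a₂ r₂ : MonoidAlgebra R G) *
      (MonoidAlgebra.single b₁ s₁ + MonoidAlgebra.single b₂ s₂)) =
    MonoidAlgebra.single (a₁*b₁) (r₁*s₁) + MonoidAlgebra.single (a₁*b₂) (r₁*s₂) +
      MonoidAlgebra.single (a₂*b₁) (r₂*s₁) + MonoidAlgebra.single (a₂*b₂) (r₂*s₂) := by
  rw [add_mul, mul_add, mul_add, MonoidAlgebra.single_mul_single, MonoidAlgebra.single_mul_single,
    MonoidAlgebra.single_mul_single, MonoidAlgebra.single_mul_single]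
  abel

lemma expand12 (a b₁ b₂ : G) (r s₁ s₂ : R) :
    ((MonoidAlgebra.single a r : MonoidAlgebra R G) *
      (MonoidAlgebra.single b₁ s₁ + MonoidAlgebra.single b₂ s₂)) =
    MonoidAlgebra.single (a*b₁) (r*s₁) + MonoidAlgebra.single (a*b₂) (r*s₂) := by
  rw [mul_add, MonoidAlgebra.single_mul_single, MonoidAlgebra.single_mul_single]

lemma expand21 (a b₁ b₂ : G) (r s₁ s₂ : R) :
    ((MonoidAlgebra.single b₁ s₁ + MonoidAlgebra.single b₂ s₂ : MonoidAlgebra R G) *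
      MonoidAlgebra.single a r) =
    MonoidAlgebra.single (b₁*a) (s₁*r) + MonoidAlgebra.single (b₂*a) (s₂*r) := by
  rw [add_mul, MonoidAlgebra.single_mul_single, MonoidAlgebra.single_mul_single]

open Classical in
lemma eval44 {c₁ c₂ c₃ c₄ c₅ c₆ c₇ c₈ : G} {v₁ v₂ v₃ v₄ v₅ v₆ v₇ v₈ : R}
    (h : (MonoidAlgebra.single c₁ v₁ + MonoidAlgebra.single c₂ v₂ + MonoidAlgebra.single c₃ v₃ +
           MonoidAlgebra.single c₄ v₄) +
         (MonoidAlgebra.single c₅ v₅ + MonoidAlgebra.single c₆ v₆ + MonoidAlgebra.single c₇ v₇ +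
           MonoidAlgebra.single c₈ v₈) = (0 : MonoidAlgebra R G)) (p : G) :
    ((if c₁ = p then v₁ else 0) + (if c₂ = p then v₂ else 0) + (if c₃ = p then v₃ else 0) +
      (if c₄ = p then v₄ else 0)) +
    ((if c₅ = p then v₅ else 0) + (if c₆ = p then v₆ else 0) + (if c₇ = p then v₇ else 0) +
      (if c₈ = p then v₈ else 0)) = 0 := by
  have h' : (Finsupp.single c₁ v₁ + Finsupp.single c₂ v₂ + Finsupp.single c₃ v₃ +
      Finsupp.single c₄ v₄) + (Finsupp.single c₅ v₅ + Finsupp.single c₆ v₆ +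
      Finsupp.single c₇ v₇ + Finsupp.single c₈ v₈) = (0 : G →₀ R) := congrArg MonoidAlgebra.coeff h
  have h0 := Finsupp.ext_iff.mp h' p
  simp only [Finsupp.add_apply, Finsupp.single_apply, Finsupp.zero_apply] at h0
  exact h0

open Classical in
lemma eval22 {c₁ c₂ c₃ c₄ : G} {v₁ v₂ v₃ v₄ : R}
    (h : (MonoidAlgebra.single c₁ v₁ + MonoidAlgebra.single c₂ v₂) +
         (MonoidAlgebra.single c₃ v₃ + MonoidAlgebra.single c₄ v₄) = (0 : MonoidAlgebra R G))
    (p : G) :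
    ((if c₁ = p then v₁ else 0) + (if c₂ = p then v₂ else 0)) +
    ((if c₃ = p then v₃ else 0) + (if c₄ = p then v₄ else 0)) = 0 := by
  have h' : (Finsupp.single c₁ v₁ + Finsupp.single c₂ v₂) +
      (Finsupp.single c₃ v₃ + Finsupp.single c₄ v₄) = (0 : G →₀ R) := congrArg MonoidAlgebra.coeff h
  have h0 := Finsupp.ext_iff.mp h' p
  simp only [Finsupp.add_apply, Finsupp.single_apply, Finsupp.zero_apply] at h0
  exact h0

end Helpers

theorem stmt12 {R : Type} [CommRing R] (hchar : ringChar R ≠ 2) {G : Type} [Group G]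
    (inv : G → G) (hmul : ∀ x y : G, inv (x * y) = inv y * inv x)
    (hinv : ∀ x : G, inv (inv x) = x) (σ : G →* Rˣ) (hnt : σ ≠ 1)
    (hcompat : ∀ x : G, x * inv x ∈ σ.ker)
    (hanti : ∀ α ∈ skewSet inv σ, ∀ β ∈ skewSet inv σ, α * β + β * α = 0)
    (y : G) (hy : inv y = y) (x : G) (hx : inv x ≠ x)
    (α : R) (hα : (MonoidAlgebra.single y α : MonoidAlgebra R G) ∈ skewSet inv σ) :
    (y⁻¹ * x * y = x ∨ y⁻¹ * x * y = inv x) ∧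
    (inv (x * y) = x * y ↔ x * y ≠ y * x) ∧
    (x * y ≠ y * x → α * (σ x : R) = α) ∧ (x * y = y * x → 2 * α = 0) := by
  classical
  haveI hNT : Nontrivial R := by
    rcases subsingleton_or_nontrivial R with hS | hN
    · exact absurd (MonoidHom.ext fun g => Units.ext (Subsingleton.elim _ _)) hnt
    · exact hN
  have h2 : (2:R) ≠ 0 := Ring.two_ne_zero hchar
  have hσ1 : ∀ g : G, (σ (inv g) : R) * (σ g : R) = 1 := by
    intro g
    have hk := hcompat (inv g)
    rw [MonoidHom.mem_ker, hinv g, map_mul] at hk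
    have h3 := congrArg Units.val hk
    rw [Units.val_mul, Units.val_one] at h3
    exact h3
  have hpair : ∀ g h : G,
      (MonoidAlgebra.single (g*h) ((1:R)*1) + MonoidAlgebra.single (g*inv h) (1*(-(σ h : R))) +
       MonoidAlgebra.single (inv g*h) ((-(σ g : R))*1) +
       MonoidAlgebra.single (inv g*inv h) ((-(σ g : R))*(-(σ h : R)))) +
      (MonoidAlgebra.single (h*g) ((1:R)*1) + MonoidAlgebra.single (h*inv g) (1*(-(σ g : R))) +
       MonoidAlgebra.single (inv h*g) ((-(σ h : R))*1) +
       MonoidAlgebra.single (inv h*inv g) ((-(σ h : R))*(-(σ g : R)))) = 0 := by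
    intro g h
    have hh := hanti _ (gam_skew inv σ hinv hσ1 g) _ (gam_skew inv σ hinv hσ1 h)
    rw [expand2, expand2] at hh
    exact hh
  have hYpair : ∀ c : R, (MonoidAlgebra.single y c : MonoidAlgebra R G) ∈ skewSet inv σ →
      (MonoidAlgebra.single (y*x) (c*1) + MonoidAlgebra.single (y*inv x) (c*(-(σ x : R)))) +
      (MonoidAlgebra.single (x*y) ((1:R)*c) + MonoidAlgebra.single (inv x*y) ((-(σ x : R))*c))
        = 0 := by
    intro c hc
    have hh := hanti _ hc _ (gam_skew inv σ hinv hσ1 x)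
    rw [expand12, expand21] at hh
    exact hh
  -- ============ part (i) core ============
  have key : x*y = y*x ∨ x*y = y*inv x := by
    by_contra hk
    push_neg at hk
    obtain ⟨A1, A2⟩ := hk
    -- Step 1: from pair (x,x): F2 and F1 and 4 = 0
    have E1 := hpair x x
    have hF2 : inv x*inv x = x*x := by
      by_contra hF2
      have e := eval44 E1 (x*x)
      rw [if_pos rfl, if_neg (show ¬(x*inv x = x*x) from fun h => hx (mul_left_cancel h)),
        if_neg (show ¬(inv x*x = x*x) from fun h => hx (mul_right_cancel h)), if_neg hF2] at e
      exact h2 (by linear_combination e)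
    have hF1 : inv x*x = x*inv x := by
      by_contra hF1
      have e := eval44 E1 (x*inv x)
      rw [if_pos rfl, if_neg (show ¬(x*x = x*inv x) from fun h => hx (mul_left_cancel h).symm),
        if_neg hF1,
        if_neg (show ¬(inv x*inv x = x*inv x) from fun h => hx (mul_right_cancel h))] at e
      have h9 : (σ x : R) * 2 = 0 := by linear_combination -e
      exact h2 (((σ x).mul_right_eq_zero).mp h9)
    have hfour : (4:R) = 0 := by
      have e := eval44 E1 (x*inv x)
      rw [if_pos rfl, if_neg (show ¬(x*x = x*inv x) from fun h => hx (mul_left_cancel h).symm),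
        if_pos hF1,
        if_neg (show ¬(inv x*inv x = x*inv x) from fun h => hx (mul_right_cancel h))] at e
      have h9 : (σ x : R) * 4 = 0 := by linear_combination -e
      exact ((σ x).mul_right_eq_zero).mp h9
    have cinv : x⁻¹*inv x = inv x*x⁻¹ := by
      simpa [mul_assoc] using congrArg (fun z => x⁻¹*z*x⁻¹) hF1
    -- the main pair (x, xy)
    have E5 := hpair x (x*y)
    rw [hmul x y, hy] at E5
    by_cases hD : inv x*y = y*x
    · -- CASE D : yx is symmetric
      -- pair (x, yx) gives σ(y)σ(x) = 1
      have E4 := hpair x (y*x)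
      rw [hmul y x, hy] at E4
      have hc6 : ∀ _ : y*x*inv x = x*(y*x), False := by
        intro hh
        apply A2
        have h1 : y*inv x*x = x*y*x := by
          rw [mul_assoc, hF1, ← mul_assoc]; exact hh.trans (mul_assoc x y x).symm
        exact (mul_right_cancel h1).symm
      have e4 := eval44 E4 (x*(y*x))
      rw [if_pos rfl,
        if_pos (show x*(inv x*y) = x*(y*x) from by rw [hD]),
        if_neg (show ¬(inv x*(y*x) = x*(y*x)) from fun h => hx (mul_right_cancel h)),
        if_neg (show ¬(inv x*(inv x*y) = x*(y*x)) from fun h => A1 (mul_left_cancel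
          (show x*(x*y) = x*(y*x) from by rw [← mul_assoc, ← hF2, mul_assoc]; exact h))),
        if_neg (show ¬(y*x*x = x*(y*x)) from fun h =>
          A1 (mul_right_cancel (h.trans (mul_assoc x y x).symm)).symm),
        if_neg (show ¬(y*x*inv x = x*(y*x)) from fun h => hc6 h),
        if_neg (show ¬(inv x*y*x = x*(y*x)) from fun h =>
          hx (mul_right_cancel (mul_right_cancel (h.trans (mul_assoc x y x).symm)))),
        if_neg (show ¬(inv x*y*inv x = x*(y*x)) from fun h => hc6 (by
          conv_lhs => rw [← hD]
          exact h))] at e4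
      have hσs : (σ (y*x) : R) = 1 := by linear_combination -e4
      rw [map_mul, Units.val_mul] at hσs
      -- evaluate pair (x, xy) at x*y*x
      have hc3 : inv x*(x*y) = x*y*x := by
        calc inv x*(x*y) = (inv x*x)*y := (mul_assoc _ _ _).symm
          _ = (x*inv x)*y := by rw [hF1]
          _ = x*(inv x*y) := mul_assoc _ _ _
          _ = x*(y*x) := by rw [hD]
          _ = x*y*x := (mul_assoc _ _ _).symm
      by_cases he : inv x*(y*inv x) = x*y*x
      · have e5 := eval44 E5 (x*y*x)
        rw [if_neg (show ¬(x*(x*y) = x*y*x) from fun h =>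
            A1 (mul_left_cancel (h.trans (mul_assoc x y x)))),
          if_neg (show ¬(x*(y*inv x) = x*y*x) from fun h =>
            hx (mul_left_cancel (mul_left_cancel (h.trans (mul_assoc x y x))))),
          if_pos hc3, if_pos he, if_pos rfl,
          if_neg (show ¬(x*y*inv x = x*y*x) from fun h => hx (mul_left_cancel h)),
          if_neg (show ¬(y*inv x*x = x*y*x) from fun h => A2 (mul_right_cancel h).symm),
          if_neg (show ¬(y*inv x*inv x = x*y*x) from fun h => A1 (mul_right_cancel
            (show y*x*x = x*y*x from by rw [mul_assoc, ← hF2, ← mul_assoc]; exact h)).symm)]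
          at e5
        have hmm : (σ (x*y) : R) = (σ x : R)*(σ y : R) := by rw [map_mul, Units.val_mul]
        rw [hmm] at e5
        exact one_ne_zero (show (1:R) = 0 by linear_combination e5 - (σ x : R)*hσs)
      · have e5 := eval44 E5 (x*y*x)
        rw [if_neg (show ¬(x*(x*y) = x*y*x) from fun h =>
            A1 (mul_left_cancel (h.trans (mul_assoc x y x)))),
          if_neg (show ¬(x*(y*inv x) = x*y*x) from fun h =>
            hx (mul_left_cancel (mul_left_cancel (h.trans (mul_assoc x y x))))),
          if_pos hc3, if_neg he, if_pos rfl,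
          if_neg (show ¬(x*y*inv x = x*y*x) from fun h => hx (mul_left_cancel h)),
          if_neg (show ¬(y*inv x*x = x*y*x) from fun h => A2 (mul_right_cancel h).symm),
          if_neg (show ¬(y*inv x*inv x = x*y*x) from fun h => A1 (mul_right_cancel
            (show y*x*x = x*y*x from by rw [mul_assoc, ← hF2, ← mul_assoc]; exact h)).symm)]
          at e5
        have hσx1 : (σ x : R) = 1 := by linear_combination -e5
        have hσy1 : (σ y : R) = 1 := by linear_combination hσs - (σ y : R)*hσx1
        have hsk2 : (MonoidAlgebra.single y (2:R)) ∈ skewSet inv σ := by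
          show sigmaStar inv σ _ = _
          rw [sigmaStar_single', hy, hσy1, one_mul, ← single_neg']
          exact congrArg _ (by linear_combination hfour)
        have e6 := eval22 (hYpair 2 hsk2) (x*y)
        rw [if_neg (show ¬(y*x = x*y) from fun h => A1 h.symm),
          if_neg (show ¬(y*inv x = x*y) from fun h => A2 h.symm), if_pos rfl,
          if_neg (show ¬(inv x*y = x*y) from fun h => hx (mul_right_cancel h))] at e6
        exact h2 (by linear_combination e6)
    · -- CASE ¬D
      by_cases he : inv x*(y*inv x) = x*y*x
      · -- derive L and evaluate at x*y*inv x
        have L : ¬ (inv x*y = y*inv x) := by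
          intro hc
          apply A1
          have h1 : inv x*(inv x*y) = x*y*x := by rw [hc]; exact he
          have h2' : x*(x*y) = x*(y*x) := by
            calc x*(x*y) = x*x*y := (mul_assoc _ _ _).symm
              _ = inv x*inv x*y := by rw [hF2]
              _ = inv x*(inv x*y) := mul_assoc _ _ _
              _ = x*y*x := h1
              _ = x*(y*x) := mul_assoc _ _ _
          exact mul_left_cancel h2'
        have c8ne : ¬ (y*inv x*inv x = x*y*inv x) := by
          intro h
          have h1 : y*x*x = x*y*inv x := by rw [mul_assoc, ← hF2, ← mul_assoc]; exact h
          have h2' : y*x*x*(x⁻¹*inv x) = x*y*inv x*(x⁻¹*inv x) := by rw [h1]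
          have hstep : inv x*(x⁻¹*inv x) = x := by
            rw [← mul_assoc, ← cinv, mul_assoc, hF2, inv_mul_cancel_left]
          have hL : y*x*x*(x⁻¹*inv x) = y*x*inv x := by
            simp only [mul_assoc]; rw [mul_inv_cancel_left]
          have hR : x*y*inv x*(x⁻¹*inv x) = x*y*x := by
            simp only [mul_assoc]; rw [hstep]
          have hQ : y*x*inv x = x*y*x := by rw [← hL, h2', hR]
          have hQ2 : y*inv x*x = x*y*x := by rw [mul_assoc, hF1, ← mul_assoc]; exact hQ
          exact A2 (mul_right_cancel hQ2).symm
        have e5 := eval44 E5 (x*y*inv x)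
        rw [if_neg (show ¬(x*(x*y) = x*y*inv x) from fun h =>
            A2 (mul_left_cancel (h.trans (mul_assoc x y (inv x))))),
          if_pos (show x*(y*inv x) = x*y*inv x from (mul_assoc x y (inv x)).symm),
          if_neg (show ¬(inv x*(x*y) = x*y*inv x) from fun h => L (mul_left_cancel
            (show x*(inv x*y) = x*(y*inv x) from by
              rw [← mul_assoc, ← hF1, mul_assoc]; exact h.trans (mul_assoc x y (inv x))))),
          if_neg (show ¬(inv x*(y*inv x) = x*y*inv x) from fun h =>
            hx (mul_right_cancel (mul_right_cancel ((mul_assoc (inv x) y (inv x)).trans h)))),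
          if_neg (show ¬(x*y*x = x*y*inv x) from fun h => hx (mul_left_cancel h).symm),
          if_pos rfl,
          if_neg (show ¬(y*inv x*x = x*y*inv x) from fun h => A1 (mul_right_cancel
            (show y*x*inv x = x*y*inv x from by
              rw [mul_assoc, ← hF1, ← mul_assoc]; exact h)).symm),
          if_neg c8ne] at e5
        have hmm : (σ (x*y) : R) = (σ x : R)*(σ y : R) := by rw [map_mul, Units.val_mul]
        rw [hmm] at e5
        have h9 : (σ x : R)*((σ y : R)+1) = 0 := by linear_combination -e5
        have hy1 : (σ y : R) = -1 := by
          have h10 := ((σ x).mul_right_eq_zero).mp h9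
          linear_combination h10
        have hsk1 : (MonoidAlgebra.single y (1:R)) ∈ skewSet inv σ := by
          show sigmaStar inv σ _ = _
          rw [sigmaStar_single', hy, hy1, ← single_neg']
          exact congrArg _ (by ring)
        have e7 := eval22 (hYpair 1 hsk1) (x*y)
        rw [if_neg (show ¬(y*x = x*y) from fun h => A1 h.symm),
          if_neg (show ¬(y*inv x = x*y) from fun h => A2 h.symm), if_pos rfl,
          if_neg (show ¬(inv x*y = x*y) from fun h => hx (mul_right_cancel h))] at e7
        exact one_ne_zero (show (1:R) = 0 by linear_combination e7)
      · -- ¬D, ¬he : contradiction 1 = 0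
        have e5 := eval44 E5 (x*y*x)
        rw [if_neg (show ¬(x*(x*y) = x*y*x) from fun h =>
            A1 (mul_left_cancel (h.trans (mul_assoc x y x)))),
          if_neg (show ¬(x*(y*inv x) = x*y*x) from fun h =>
            hx (mul_left_cancel (mul_left_cancel (h.trans (mul_assoc x y x))))),
          if_neg (show ¬(inv x*(x*y) = x*y*x) from fun h => hD (mul_left_cancel
            (show x*(inv x*y) = x*(y*x) from by
              rw [← mul_assoc, ← hF1, mul_assoc]; exact h.trans (mul_assoc x y x)))),
          if_neg he, if_pos rfl,
          if_neg (show ¬(x*y*inv x = x*y*x) from fun h => hx (mul_left_cancel h)),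
          if_neg (show ¬(y*inv x*x = x*y*x) from fun h => A2 (mul_right_cancel h).symm),
          if_neg (show ¬(y*inv x*inv x = x*y*x) from fun h => A1 (mul_right_cancel
            (show y*x*x = x*y*x from by rw [mul_assoc, ← hF2, ← mul_assoc]; exact h)).symm)]
          at e5
        exact one_ne_zero (show (1:R) = 0 by linear_combination e5)
  -- ============ conclusions ============
  refine ⟨?_, ?_, ?_, ?_⟩
  · rcases key with h | h
    · left; rw [mul_assoc, h, ← mul_assoc, inv_mul_cancel, one_mul]
    · right; rw [mul_assoc, h, ← mul_assoc, inv_mul_cancel, one_mul]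
  · rw [hmul, hy]
    constructor
    · intro hsym hcomm
      exact hx (mul_left_cancel (hsym.trans hcomm))
    · intro hne
      exact (key.resolve_left hne).symm
  · intro hne
    have hxy : x*y = y*inv x := key.resolve_left hne
    have e8 := eval22 (hYpair α hα) (x*y)
    rw [if_neg (show ¬(y*x = x*y) from fun h => hne h.symm),
      if_pos (show y*inv x = x*y from hxy.symm), if_pos rfl,
      if_neg (show ¬(inv x*y = x*y) from fun h => hx (mul_right_cancel h))] at e8
    linear_combination -e8
  · intro hcomm
    have e8 := eval22 (hYpair α hα) (x*y)
    rw [if_pos (show y*x = x*y from hcomm.symm),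
      if_neg (show ¬(y*inv x = x*y) from fun h => hx (mul_left_cancel (h.trans hcomm))),
      if_pos rfl,
      if_neg (show ¬(inv x*y = x*y) from fun h => hx (mul_right_cancel h))] at e8
    linear_combination e8
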